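/- Let f : ℝ → ℝ be continuous with f(u) = o(|u|) as u → 0, and suppose 0 < q·F(u) ≤ u·f(u) for all u ≠ 0 with q > 2, where F(u) = ∫₀ᵘ f(s) ds. Then for every ε > 0 there exists C_ε > 0 such that F(u) ≥ -ε|u|² + C_ε|u|^q for all u ∈ ℝ. -/

import Mathlib

open Real

lemma stmt_5_key (F f : ℝ → ℝ) (hder : ∀ t, HasDerivAt F (f t) t)
    (q : ℝ) (hq : 0 < q) (h : ∀ t : ℝ, 1 ≤ t → q * F t ≤ t * f t) :
    ∀ u : ℝ, 1 ≤ u → F 1 * u ^ q ≤ F u := by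
  set φ : ℝ → ℝ := fun t => F t * t ^ (-q) with hφ
  have hφder : ∀ t : ℝ, 0 < t →
      HasDerivAt φ ((t * f t - q * F t) * t ^ (-q - 1)) t := by
    intro t ht
    have h1 : HasDerivAt (fun x : ℝ => x ^ (-q)) (-q * t ^ (-q - 1)) t :=
      Real.hasDerivAt_rpow_const (Or.inl (ne_of_gt ht))
    have h2 := (hder t).mul h1
    refine HasDerivAt.congr_deriv h2 ?_
    have ht0 : t ^ (-q) = t * t ^ (-q - 1) := by
      nth_rewrite 1 [show (-q : ℝ) = 1 + (-q - 1) by ring]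
      rw [Real.rpow_add ht, Real.rpow_one]
    rw [ht0]; ring
  have hmono : MonotoneOn φ (Set.Ici (1:ℝ)) := by
    apply monotoneOn_of_deriv_nonneg (convex_Ici 1)
    · apply ContinuousOn.mul
      · exact (continuous_iff_continuousAt.2 fun t => (hder t).continuousAt).continuousOn
      · exact ContinuousOn.rpow_const continuousOn_id fun x hx =>
          Or.inl (ne_of_gt (lt_of_lt_of_le one_pos hx))
    · intro x hx
      rw [interior_Ici] at hx
      exact ((hφder x (lt_trans one_pos hx)).differentiableAt).differentiableWithinAt
    · intro x hx
      rw [interior_Ici] at hx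
      have hx0 : (0:ℝ) < x := lt_trans one_pos hx
      rw [(hφder x hx0).deriv]
      have h1 : 0 ≤ x * f x - q * F x := sub_nonneg.2 (h x hx.le)
      exact mul_nonneg h1 (Real.rpow_pos_of_pos hx0 _).le
  intro u hu
  have h1 := hmono (Set.self_mem_Ici) (Set.mem_Ici.2 hu) hu
  have hu0 : (0:ℝ) < u := lt_of_lt_of_le one_pos hu
  have hone : φ 1 = F 1 := by simp [hφ, Real.one_rpow]
  rw [hone] at h1
  have hq' : (0:ℝ) < u ^ q := Real.rpow_pos_of_pos hu0 q
  have := mul_le_mul_of_nonneg_right h1 hq'.le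
  calc F 1 * u ^ q ≤ F u * u ^ (-q) * u ^ q := this
    _ = F u := by
        rw [mul_assoc, ← Real.rpow_add hu0]
        simp

theorem stmt_5 (f : ℝ → ℝ) (hf : Continuous f)
    (hsmall : Filter.Tendsto (fun u : ℝ => |f u| / |u|) (nhdsWithin 0 {0}ᶜ) (nhds 0))
    (F : ℝ → ℝ) (hF : ∀ u, F u = ∫ s in (0:ℝ)..u, f s)
    (q : ℝ) (hq : 2 < q)
    (hAR : ∀ u : ℝ, u ≠ 0 → 0 < q * F u ∧ q * F u ≤ u * f u) :
    ∀ ε > (0:ℝ), ∃ Cε > (0:ℝ), ∀ u : ℝ,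
      F u ≥ -ε * |u| ^ 2 + Cε * |u| ^ q := by
  have hq0 : (0:ℝ) < q := by linarith
  have hder : ∀ t, HasDerivAt F (f t) t := by
    intro t
    have := (hf.integral_hasStrictDerivAt 0 t).hasDerivAt
    have heq : F = fun u => ∫ s in (0:ℝ)..u, f s := funext hF
    rw [heq]; exact this
  have hFpos : ∀ u : ℝ, u ≠ 0 → 0 < F u := by
    intro u hu
    have := (hAR u hu).1
    nlinarith
  have hF0 : F 0 = 0 := by rw [hF]; simp
  have hFnonneg : ∀ u : ℝ, 0 ≤ F u := by
    intro u
    rcases eq_or_ne u 0 with h | h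
    · rw [h, hF0]
    · exact (hFpos u h).le
  -- growth for u ≥ 1
  have hgrow_pos : ∀ u : ℝ, 1 ≤ u → F 1 * u ^ q ≤ F u :=
    stmt_5_key F f hder q hq0 fun t ht => (hAR t (by linarith)).2
  -- growth for u ≤ -1 via G t = F (-t)
  have hgrow_neg : ∀ u : ℝ, u ≤ -1 → F (-1) * (-u) ^ q ≤ F u := by
    have hderG : ∀ t : ℝ, HasDerivAt (fun t => F (-t)) (-f (-t)) t := by
      intro t
      have := ((hder (-t)).comp t (hasDerivAt_neg t))
      exact HasDerivAt.congr_deriv this (by ring)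
    have hkey := stmt_5_key (fun t => F (-t)) (fun t => -f (-t)) hderG q hq0
      (fun t ht => by
        have := (hAR (-t) (by intro h; rw [neg_eq_zero] at h; linarith)).2
        simpa using by linarith [this])
    intro u hu
    have := hkey (-u) (by linarith)
    simpa using this
  intro ε hε
  have hF1 : 0 < F 1 := hFpos 1 one_ne_zero
  have hFm1 : 0 < F (-1) := hFpos (-1) (by norm_num)
  set m : ℝ := min (F 1) (F (-1)) with hm
  set Cε : ℝ := min ε m with hCε
  have hmpos : 0 < m := lt_min hF1 hFm1
  have hCpos : 0 < Cε := lt_min hε hmpos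
  refine ⟨Cε, hCpos, fun u => ?_⟩
  have habs : (0:ℝ) ≤ |u| := abs_nonneg u
  rcases le_or_gt |u| 1 with hle | hgt
  · -- small u: RHS ≤ 0 ≤ F u
    have hpow : |u| ^ q ≤ |u| ^ (2:ℝ) := by
      rcases eq_or_lt_of_le habs with h0 | h0
      · rw [← h0, Real.zero_rpow (by linarith : q ≠ 0),
          Real.zero_rpow (by norm_num : (2:ℝ) ≠ 0)]
      · exact Real.rpow_le_rpow_of_exponent_ge h0 hle (by linarith)
    have h2 : |u| ^ (2:ℝ) = |u| ^ 2 := by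
      rw [show (2:ℝ) = ((2:ℕ):ℝ) by norm_num, Real.rpow_natCast]
    rw [h2] at hpow
    have hC1 : Cε ≤ ε := min_le_left _ _
    have hpownn : 0 ≤ |u| ^ q := Real.rpow_nonneg habs q
    have : Cε * |u| ^ q ≤ ε * |u| ^ 2 := by nlinarith
    have := hFnonneg u
    linarith
  · -- large u
    have hCm : Cε ≤ m := min_le_right _ _
    have hpownn : 0 ≤ |u| ^ q := Real.rpow_nonneg habs q
    have hsqnn : 0 ≤ ε * |u| ^ 2 := by positivity
    have hFq : m * |u| ^ q ≤ F u := by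
      rcases le_or_gt 0 u with hu | hu
      · have hu1 : 1 ≤ u := by
          rw [abs_of_nonneg hu] at hgt; linarith
        have h := hgrow_pos u hu1
        rw [abs_of_nonneg hu]
        nlinarith [min_le_left (F 1) (F (-1)), Real.rpow_pos_of_pos (lt_of_lt_of_le one_pos hu1) q]
      · have hu1 : u ≤ -1 := by
          rw [abs_of_neg hu] at hgt; linarith
        have h := hgrow_neg u hu1
        rw [abs_of_neg hu]
        nlinarith [min_le_right (F 1) (F (-1)),
          Real.rpow_pos_of_pos (show (0:ℝ) < -u by linarith) q]
    nlinarith
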